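/- Let k be a positive integer divisible by 10, and let p be a prime such that gcd(p − 1, F_{p−1}) = k. Then gcd(p(p−1), F_{p(p−1)}) = kp. -/

import Mathlib

open Nat

private lemma fib_matrix_pow {R : Type*} [CommRing R] (n : ℕ) :
    (!![1,1;1,0] : Matrix (Fin 2) (Fin 2) R) ^ (n+1) =
      !![(fib (n+2) : R), (fib (n+1) : R); (fib (n+1) : R), (fib n : R)] := by
  induction n with
  | zero => simp [pow_one]
  | succ n ih =>
      rw [pow_succ, ih, Matrix.mul_fin_two]
      congr 1 <;> push_cast [fib_add_two] <;> ring

private lemma prime_dvd_fib_card (q : ℕ) (hq : q.Prime) : q ∣ fib ((q^2-1)*(q^2-q)) := by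
  haveI : Fact q.Prime := ⟨hq⟩
  set M : Matrix (Fin 2) (Fin 2) (ZMod q) := !![1,1;1,0] with hM
  have hinv : M * !![0,1;1,-1] = 1 := by
    rw [hM, Matrix.mul_fin_two, Matrix.one_fin_two]; norm_num
  have hinv' : !![0,1;1,-1] * M = 1 := by
    rw [hM, Matrix.mul_fin_two, Matrix.one_fin_two]; norm_num
  set u : GL (Fin 2) (ZMod q) := ⟨M, !![0,1;1,-1], hinv, hinv'⟩ with hu
  have hcard : Nat.card (GL (Fin 2) (ZMod q)) = (q^2 - 1) * (q^2 - q) := by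
    rw [Matrix.card_GL_field]
    simp [Fin.prod_univ_two, ZMod.card]
  have hpow : u ^ ((q^2-1)*(q^2-q)) = 1 := by
    rw [← hcard]; exact pow_card_eq_one'
  have hMpow : M ^ ((q^2-1)*(q^2-q)) = 1 := by
    have := congrArg Units.val hpow
    simpa [Units.val_pow_eq_pow_val] using this
  have h2 : 2 ≤ q := hq.two_le
  have hNpos : (q^2-1)*(q^2-q) ≠ 0 := by
    have hx : 1 < q^2 := by nlinarith
    have hy : q < q^2 := by nlinarith
    have := Nat.sub_pos_of_lt hx
    have := Nat.sub_pos_of_lt hy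
    positivity
  obtain ⟨N', hN'⟩ := Nat.exists_eq_succ_of_ne_zero hNpos
  rw [hN'] at hMpow
  rw [fib_matrix_pow] at hMpow
  have h01 := Matrix.ext_iff.mpr hMpow 0 1
  rw [Matrix.one_fin_two] at h01
  simp at h01
  rw [← ZMod.natCast_eq_zero_iff, hN']
  exact h01

private lemma fib_lift (q n j : ℕ) (hq : 1 ≤ q) (hj : 1 ≤ j) (hn : 1 ≤ n)
    (h : q^j ∣ fib n) : q^(j+1) ∣ fib (q*n) := by
  obtain ⟨n', rfl⟩ : ∃ n', n = n' + 1 := ⟨n-1, by omega⟩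
  set R := ZMod (q^(j+1)) with hR
  have hb2 : (fib (n'+1) : R) * (fib (n'+1) : R) = 0 := by
    rw [← Nat.cast_mul, ZMod.natCast_eq_zero_iff]
    calc q^(j+1) ∣ q^j * q^j := by
          rw [← pow_add]; exact pow_dvd_pow q (by omega)
      _ ∣ fib (n'+1) * fib (n'+1) := mul_dvd_mul h h
  have hqb : (q : R) * (fib (n'+1) : R) = 0 := by
    rw [← Nat.cast_mul, ZMod.natCast_eq_zero_iff, pow_succ, mul_comm (q^j) q]
    exact mul_dvd_mul_left q h
  have hc : (fib (n'+2) : R) = (fib (n'+1) : R) + (fib n' : R) := by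
    rw [fib_add_two]; push_cast; ring
  have key : ∀ s : ℕ, ((fib ((s+1)*(n'+1)) : R) = (s+1) * (fib (n'+1) : R) * (fib (n'+2) : R)^s ∧
      (fib ((s+1)*(n'+1) + 1) : R) * (fib (n'+1) : R)
        = (fib (n'+2) : R)^(s+1) * (fib (n'+1) : R)) := by
    intro s
    induction s with
    | zero => constructor <;> · push_cast +zetaDelta; ring
    | succ s ih =>
        obtain ⟨ih1, ih2⟩ := ih
        have e1 : (s+1+1)*(n'+1) = (s+1)*(n'+1) + n' + 1 := by ring
        have e2 : (s+1+1)*(n'+1) + 1 = (s+1)*(n'+1) + (n'+1) + 1 := by ring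
        constructor
        · rw [e1, fib_add]
          push_cast +zetaDelta [hc] at ih1 ih2 ⊢
          linear_combination (fib n' : R) * ih1 + ih2
            - ((s:R)+1) * ((fib (n'+1) : R) + (fib n' : R))^s * hb2
        · rw [e2, fib_add]
          push_cast +zetaDelta [hc] at ih1 ih2 ⊢
          linear_combination ((fib ((s+1)*(n'+1)) : R)) * hb2
            + ((fib (n'+1) : R) + (fib n' : R)) * ih2
  have hqq : q - 1 + 1 = q := by omega
  have hfin := (key (q-1)).1
  rw [hqq] at hfin
  have : (fib (q*(n'+1)) : R) = 0 := by
    rw [hfin]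
    push_cast [Nat.cast_sub hq]
    linear_combination ((fib (n'+2) : R))^(q-1) * hqb
  rwa [ZMod.natCast_eq_zero_iff] at this

private lemma prime_pow_dvd_fib (q a : ℕ) (hq : q.Prime) (ha : 1 ≤ a) :
    q^a ∣ fib (q^a * ((q^2-1)*(q-1))) := by
  have h2 : 2 ≤ q := hq.two_le
  have hX : 1 ≤ (q^2-1)*(q-1) := by
    have hx : 1 < q^2 := by nlinarith
    have h1 : 1 ≤ q^2-1 := by omega
    have h1' : 1 ≤ q-1 := by omega
    calc 1 = 1*1 := by ring
      _ ≤ (q^2-1)*(q-1) := Nat.mul_le_mul h1 h1'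
  induction a, ha using Nat.le_induction with
  | base =>
      have base := prime_dvd_fib_card q hq
      have heq : (q^2-1)*(q^2-q) = q^1 * ((q^2-1)*(q-1)) := by
        obtain ⟨r, rfl⟩ : ∃ r, q = r + 1 := ⟨q-1, by omega⟩
        have e1 : (r+1)^2 = (r+1)*r + (r+1) := by ring
        have e2 : (r+1)^2 - (r+1) = (r+1)*r := by omega
        rw [pow_one]
        have e3 : r + 1 - 1 = r := by omega
        rw [e2, e3]
        ring
      rw [heq] at base
      simpa using base
  | succ a ha ih =>
      have hstep := fib_lift q (q^a * ((q^2-1)*(q-1))) a (by omega) ha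
        (Nat.mul_pos (pow_pos (by omega) a) hX) ih
      have heq : q * (q^a * ((q^2-1)*(q-1))) = q^(a+1) * ((q^2-1)*(q-1)) := by ring
      rwa [heq] at hstep

private lemma fib_binet {R : Type*} [CommRing R] (W : R) (hW : W^2 = W + 1) (n : ℕ) :
    (fib n : R) * (W - (1 - W)) = W^n - (1-W)^n := by
  induction n using Nat.twoStepInduction with
  | zero => simp
  | one => push_cast; ring
  | more n ih1 ih2 =>
      rw [fib_add_two]
      push_cast
      have hψ : (1-W)^2 = (1-W) + 1 := by linear_combination hW
      calc ((fib n : R) + (fib (n+1) : R)) * (W - (1 - W))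
          = (fib n : R) * (W - (1-W)) + (fib (n+1) : R) * (W - (1-W)) := by ring
        _ = (W^n - (1-W)^n) + (W^(n+1) - (1-W)^(n+1)) := by rw [ih1, ih2]
        _ = W^n * (W + 1) - (1-W)^n * ((1-W) + 1) := by ring
        _ = W^n * W^2 - (1-W)^n * (1-W)^2 := by rw [hW, hψ]
        _ = W^(n+2) - (1-W)^(n+2) := by ring

private lemma prime_dvd_fib_pred (p : ℕ) (hp : p.Prime) (h5 : 5 ∣ p - 1) :
    p ∣ fib (p-1) := by
  haveI : Fact p.Prime := ⟨hp⟩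
  haveI : Fact (Nat.Prime 5) := ⟨by norm_num⟩
  have hp5 : p ≠ 5 := by rintro rfl; norm_num at h5
  obtain ⟨g, hg⟩ := exists_prime_orderOf_dvd_card (G := (ZMod p)ˣ) 5
    (by rw [ZMod.card_units]; exact h5)
  set z : ZMod p := (g : ZMod p) with hzdef
  have hg5 : g ^ 5 = 1 := by rw [← hg]; exact pow_orderOf_eq_one g
  have hz5 : z ^ 5 = 1 := by
    have := congrArg (Units.val) hg5; simpa using this
  have hz1 : z ≠ 1 := by
    intro h1
    have : g = 1 := Units.val_eq_one.mp h1
    rw [this] at hg; simp at hg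
  have hsum : z^4 + z^3 + z^2 + z + 1 = 0 := by
    have hfac : (z - 1) * (z^4+z^3+z^2+z+1) = 0 := by linear_combination hz5
    rcases mul_eq_zero.mp hfac with h | h
    · exact absurd (sub_eq_zero.mp h) hz1
    · exact h
  set W : ZMod p := -(z + z^4) with hWdef
  have hW : W^2 = W + 1 := by
    rw [hWdef]; linear_combination (2 + z^3) * hz5 + hsum
  have hWψ : W * (1 - W) = -1 := by linear_combination -hW
  have hW0 : W ≠ 0 := by
    intro h0; rw [h0] at hWψ; simp at hWψ
  have hψ0 : (1 - W) ≠ 0 := by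
    intro h0; rw [h0] at hWψ; simp at hWψ
  have h5ne : (5 : ZMod p) ≠ 0 := by
    have : ((5:ℕ) : ZMod p) ≠ 0 := by
      rw [Ne, ZMod.natCast_eq_zero_iff]
      intro hdvd
      exact hp5 ((Nat.prime_dvd_prime_iff_eq hp (by norm_num)).mp hdvd)
    simpa using this
  have hdiff : W - (1 - W) ≠ 0 := by
    intro h0
    have h5eq : (W - (1-W))^2 = 5 := by linear_combination 4*hW
    rw [h0] at h5eq
    simp at h5eq
    exact h5ne h5eq.symm
  have hbin := fib_binet W hW (p-1)
  rw [ZMod.pow_card_sub_one_eq_one hW0, ZMod.pow_card_sub_one_eq_one hψ0] at hbin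
  simp only [sub_self] at hbin
  rcases mul_eq_zero.mp hbin with h0 | h0
  · rwa [ZMod.natCast_eq_zero_iff] at h0
  · exact absurd h0 hdiff

private lemma crux (p m : ℕ) (hp : p.Prime) (hm : m ∣ p - 1) (h10 : 10 ∣ p - 1)
    (hf : m ∣ fib (p*(p-1))) : m ∣ fib (p-1) := by
  have hp2 := hp.two_le
  have hp1 : 10 ≤ p - 1 := Nat.le_of_dvd (by omega) h10
  have hm0 : m ≠ 0 := by
    rintro rfl
    rw [zero_dvd_iff] at hm
    omega
  have hmle : m ≤ p - 1 := Nat.le_of_dvd (by omega) hm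
  set N := m * ∏ q ∈ m.primeFactors, ((q^2-1)*(q-1)) with hN
  have hstep : m ∣ fib N := by
    rw [Nat.dvd_iff_prime_pow_dvd_dvd]
    intro q c hqp hqc
    rcases Nat.eq_zero_or_pos c with rfl | hc
    · simp
    have hq : q.Prime := hqp
    have hqdm : q ∣ m := (dvd_pow_self q (by omega : c ≠ 0)).trans hqc
    have hqm : q ∈ m.primeFactors := Nat.mem_primeFactors.mpr ⟨hq, hqdm, hm0⟩
    have h1 : q^c ∣ fib (q^c * ((q^2-1)*(q-1))) := prime_pow_dvd_fib q c hq hc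
    refine h1.trans (fib_dvd _ _ ?_)
    exact mul_dvd_mul hqc (Finset.dvd_prod_of_mem _ hqm)
  have hcop : ¬ p ∣ N := by
    intro hpn
    rcases (Nat.Prime.dvd_mul hp).mp hpn with hpm | hpp
    · have := Nat.le_of_dvd (by omega) hpm
      omega
    · obtain ⟨q, hqmem, hpq⟩ := (hp.prime.dvd_finset_prod_iff _).mp hpp
      obtain ⟨hq, hqdm, -⟩ := Nat.mem_primeFactors.mp hqmem
      have hq2 := hq.two_le
      have hqle : q ≤ p - 1 := le_trans (Nat.le_of_dvd (by omega) hqdm) hmle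
      have hfac : q^2 - 1 = (q-1)*(q+1) := by
        obtain ⟨r, rfl⟩ : ∃ r, q = r + 1 := ⟨q-1, by omega⟩
        have e1 : (r+1)^2 = r*(r+2) + 1 := by ring
        have e2 : r + 1 - 1 = r := by omega
        rw [e1, e2]
        have e4 : r*(r+1+1) = r*(r+2) := by ring
        omega
      rcases (Nat.Prime.dvd_mul hp).mp hpq with hpq1 | hpq2
      · rw [hfac] at hpq1
        rcases (Nat.Prime.dvd_mul hp).mp hpq1 with hA | hB
        · have := Nat.le_of_dvd (by omega) hA
          omega
        · have hle := Nat.le_of_dvd (by omega) hB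
          have hqp1 : q = p - 1 := by omega
          have heven : 2 ∣ q := by omega
          have : q = 2 := (Nat.Prime.eq_one_or_self_of_dvd hq 2 heven).resolve_left (by norm_num) |>.symm
          omega
      · have := Nat.le_of_dvd (by omega) hpq2
        omega
  have hgf : m ∣ fib (Nat.gcd N (p*(p-1))) := by
    rw [Nat.fib_gcd]
    exact Nat.dvd_gcd hstep hf
  have hgp : Nat.Coprime (Nat.gcd N (p*(p-1))) p := by
    rw [Nat.coprime_comm]
    exact hp.coprime_iff_not_dvd.mpr (fun hpg => hcop (hpg.trans (Nat.gcd_dvd_left _ _)))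
  have hgdvd : Nat.gcd N (p*(p-1)) ∣ p - 1 :=
    hgp.dvd_of_dvd_mul_left (Nat.gcd_dvd_right _ _)
  exact hgf.trans (fib_dvd _ _ hgdvd)

theorem gcd_fib_lift (k p : ℕ) (hk : 0 < k) (h10 : 10 ∣ k) (hp : p.Prime)
    (h : Nat.gcd (p - 1) (Nat.fib (p - 1)) = k) :
    Nat.gcd (p * (p - 1)) (Nat.fib (p * (p - 1))) = k * p := by
  have hk1 : k ∣ p - 1 := h ▸ Nat.gcd_dvd_left _ _
  have hk2 : k ∣ fib (p-1) := h ▸ Nat.gcd_dvd_right _ _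
  have h10' : 10 ∣ p - 1 := h10.trans hk1
  have hp2 := hp.two_le
  have h10le : 10 ≤ p - 1 := Nat.le_of_dvd (by omega) h10'
  have h5 : 5 ∣ p - 1 := dvd_trans (by norm_num) h10'
  have hpf : p ∣ fib (p-1) := prime_dvd_fib_pred p hp h5
  have hfibdvd : fib (p-1) ∣ fib (p*(p-1)) := fib_dvd _ _ (dvd_mul_left _ _)
  have hkle : k ≤ p - 1 := Nat.le_of_dvd (by omega) hk1
  have hpk : ¬ p ∣ k := fun hd => by have := Nat.le_of_dvd hk hd; omega
  have hcop : Nat.Coprime k p := Nat.coprime_comm.mp (hp.coprime_iff_not_dvd.mpr hpk)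
  apply Nat.dvd_antisymm
  · -- gcd ∣ k * p
    set d := Nat.gcd (p*(p-1)) (fib (p*(p-1))) with hd
    have hd1 : d ∣ p * (p-1) := Nat.gcd_dvd_left _ _
    have hd2 : d ∣ fib (p*(p-1)) := Nat.gcd_dvd_right _ _
    set m := Nat.gcd d (p-1) with hm
    have hm1 : m ∣ p - 1 := Nat.gcd_dvd_right _ _
    have hmf : m ∣ fib (p-1) := crux p m hp hm1 h10' ((Nat.gcd_dvd_left d _).trans hd2)
    have hmk : m ∣ k := by rw [← h]; exact Nat.dvd_gcd hm1 hmf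
    have hdpm : d ∣ p * m := by
      by_cases hpd : p ∣ d
      · obtain ⟨d', hdd⟩ := hpd
        have hd'p : d' ∣ p - 1 :=
          (Nat.mul_dvd_mul_iff_left (by omega : 0 < p)).mp (hdd ▸ hd1)
        have hd'd : d' ∣ d := ⟨p, by rw [hdd]; ring⟩
        rw [hdd]
        exact Nat.mul_dvd_mul_left p (Nat.dvd_gcd hd'd hd'p)
      · have hcopd : Nat.Coprime d p := Nat.coprime_comm.mp (hp.coprime_iff_not_dvd.mpr hpd)
        have hdp1 : d ∣ p - 1 := hcopd.dvd_of_dvd_mul_left hd1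
        exact dvd_mul_of_dvd_right (Nat.dvd_gcd dvd_rfl hdp1) p
    calc d ∣ p * m := hdpm
      _ ∣ p * k := Nat.mul_dvd_mul_left p hmk
      _ = k * p := mul_comm p k
  · refine Nat.dvd_gcd ?_ ?_
    · rw [mul_comm k p]
      exact Nat.mul_dvd_mul_left p hk1
    · exact hcop.mul_dvd_of_dvd_of_dvd (hk2.trans hfibdvd) (hpf.trans hfibdvd)
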